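/- The graph grid has rotational symmetry about the origin: for every (m,n) ∈ ℤ² there exists (m',n') ∈ ℤ² with T(m',n') = −T(m,n). -/

import Mathlib

/-- The linear part of the canonical affine transformation, with parameter `A`. -/
noncomputable def dT (A : ℝ) (v : ℝ × ℝ) : ℝ × ℝ :=
  (((A ^ 2 + A) * v.1 + (A + 1) * v.2) / (A + 1),
   ((-A ^ 2 + 2 * A + 1) * v.1 + (-2 * A) * v.2) / (A + 1))

/-- The canonical affine transformation `T` for the parameter `p/q`,
with `τ` the inverse of `2p` mod `p+q`. -/
noncomputable def Tc (p q τ : ℤ) (v : ℝ × ℝ) : ℝ × ℝ :=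
  dT ((p : ℝ) / (q : ℝ)) v +
    (1 / (2 * (q : ℝ)), -1 / (2 * (q : ℝ)) + 1 / ((p : ℝ) + (q : ℝ)) + (τ : ℝ))

/-- the graph grid has rotational symmetry about the origin. -/
theorem stmt10 (p q : ℤ) (hp : 0 < p) (hpq : p < q) (hcop : IsCoprime p q)
    (he : Even (p * q)) (τ : ℤ) (hτ0 : 0 < τ) (hτω : τ < p + q)
    (hτ : (p + q) ∣ (2 * p * τ - 1)) :
    ∀ m n : ℤ, ∃ m' n' : ℤ,
      Tc p q τ ((m' : ℝ), (n' : ℝ)) = -Tc p q τ ((m : ℝ), (n : ℝ)) := by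
  obtain ⟨k, hk⟩ := hτ
  intro m n
  refine ⟨k - 2 * τ - m, k - n, ?_⟩
  have hq : (q : ℝ) ≠ 0 := Int.cast_ne_zero.mpr (by omega)
  have hω : (p : ℝ) + (q : ℝ) ≠ 0 := by
    have h : ((p + q : ℤ) : ℝ) ≠ 0 := Int.cast_ne_zero.mpr (by omega)
    push_cast at h; exact h
  have hA : (p : ℝ) / (q : ℝ) + 1 ≠ 0 := by
    intro h
    apply hω
    field_simp at h
    linarith
  have hk' : 2 * (p : ℝ) * (τ : ℝ) - 1 = ((p : ℝ) + (q : ℝ)) * (k : ℝ) := by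
    have := congrArg (Int.cast : ℤ → ℝ) hk
    push_cast at this; linarith
  simp only [Tc, dT, Prod.mk_add_mk, Prod.neg_mk, Prod.mk.injEq]
  push_cast
  constructor
  · field_simp
    linear_combination (-2) * hk'
  · field_simp
    linear_combination (2*(p:ℝ) - 2*(q:ℝ)) * hk'
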